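/- arXiv:2402.02605 — 3 statements merged into one kernel-verified Lean document; each statement's English description precedes it below -/
import Mathlib

section
/- Assume condition (*): for every morphism f : x → y in D, the equivalence class {g : s(g)=s(f)} equals Id_y ∘ f and equals f ∘ Id_x. Then for any f ∈ Mor D and any s₀ ∈ S there exist s', s'' ∈ S with s₀·f = f·s' and f·s₀ = s''·f in the category algebra kD. -/
open CategoryTheory

variable (k : Type) [Field k]

variable (D : Type) [SmallCategory D] [Fintype D] [DecidableEq D]
  [∀ x y : D, Fintype (x ⟶ y)] [∀ x y : D, DecidableEq (x ⟶ y)]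
variable (C : Type) [SmallCategory C] [Fintype C] [DecidableEq C]
  [∀ x y : C, Fintype (x ⟶ y)] [∀ x y : C, DecidableEq (x ⟶ y)]

/-- The set of morphisms of a category, as a sigma type. -/
abbrev Mor (C : Type) [SmallCategory C] : Type := Σ x y : C, x ⟶ y

/-- Composition of composable morphisms: `compMor g f h = g ∘ f` when `d(g) = c(f)`. -/
def compMor {C : Type} [SmallCategory C] (g f : Mor C) (h : g.1 = f.2.1) : Mor C :=
  ⟨f.1, g.2.1, f.2.2 ≫ eqToHom h.symm ≫ g.2.2⟩

/-- The action of a functor `s : D ⥤ C` on the set of morphisms. -/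
def sMor {D C : Type} [SmallCategory D] [SmallCategory C] (s : D ⥤ C) (f : Mor D) : Mor C :=
  ⟨s.obj f.1, s.obj f.2.1, s.map f.2.2⟩

/-- The category algebra `kD`, as a `k`-vector space with basis `Mor D`. -/
abbrev CatAlg (D : Type) [SmallCategory D] : Type := Mor D →₀ k

/-- Product of two basis elements of the category algebra. -/
noncomputable def catMulSingle {D : Type} [SmallCategory D] [DecidableEq D]
    (g f : Mor D) : CatAlg k D :=
  if h : g.1 = f.2.1 then Finsupp.single (compMor g f h) 1 else 0

/-- The multiplication of the category algebra, as a bilinear map. -/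
noncomputable def catMulL {D : Type} [SmallCategory D] [DecidableEq D] :
    CatAlg k D →ₗ[k] CatAlg k D →ₗ[k] CatAlg k D :=
  Finsupp.lsum k fun g => LinearMap.toSpanSingleton k _
    (Finsupp.lsum k fun f => LinearMap.toSpanSingleton k _ (catMulSingle k g f))

/-- The identity `∑_{x ∈ Ob D} 1_x` of the category algebra. -/
noncomputable def catOne (D : Type) [SmallCategory D] [Fintype D] : CatAlg k D :=
  ∑ x : D, Finsupp.single ⟨x, x, 𝟙 x⟩ 1

variable (s : D ⥤ C)

/-- `Id_x = { f ∈ Mor D ∣ s(f) = 1_{s(x)} }` (such `f` are endomorphisms of `x`, since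
`s` is injective on objects). -/
def IdC (x : D) : Set (x ⟶ x) := {f | s.map f = 𝟙 (s.obj x)}

/-- `𝒮 = { ∑_{x ∈ Ob D} f_x ∣ f_x ∈ Id_x } ⊆ kD`. -/
def SMonSet : Set (CatAlg k D) :=
  {a | ∃ F : ∀ x : D, x ⟶ x, (∀ x, F x ∈ IdC D C s x) ∧
    a = ∑ x : D, Finsupp.single ⟨x, x, F x⟩ 1}

/-- Condition (*): for every `f : x ⟶ y` in `D`, the `∼ₛ`-class of `f` equals
`Id_y ∘ f` and equals `f ∘ Id_x`. -/
def StarCond : Prop :=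
  ∀ (x y : D) (f : x ⟶ y) (g : Mor D),
    (sMor s g = sMor s ⟨x, y, f⟩ ↔ ∃ h : y ⟶ y, h ∈ IdC D C s y ∧ g = ⟨x, y, f ≫ h⟩) ∧
    (sMor s g = sMor s ⟨x, y, f⟩ ↔ ∃ h : x ⟶ x, h ∈ IdC D C s x ∧ g = ⟨x, y, h ≫ f⟩)

lemma catMulL_single_single (g f : Mor D) :
    catMulL k (Finsupp.single g (1:k)) (Finsupp.single f 1) = catMulSingle k g f := by
  simp [catMulL]

lemma catMulL_S_single (F : ∀ x : D, x ⟶ x) (x₀ y₀ : D) (φ : x₀ ⟶ y₀) :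
    catMulL k (∑ x : D, Finsupp.single ⟨x, x, F x⟩ (1:k))
      (Finsupp.single ⟨x₀, y₀, φ⟩ 1) =
      Finsupp.single ⟨x₀, y₀, φ ≫ F y₀⟩ 1 := by
  rw [map_sum]
  simp only [LinearMap.coe_sum, Finset.sum_apply, catMulL_single_single]
  rw [Finset.sum_eq_single y₀]
  · simp [catMulSingle, compMor]
  · intro x _ hx
    rw [catMulSingle, dif_neg]
    exact hx
  · simp

lemma catMulL_single_S (F : ∀ x : D, x ⟶ x) (x₀ y₀ : D) (φ : x₀ ⟶ y₀) :
    catMulL k (Finsupp.single ⟨x₀, y₀, φ⟩ (1:k))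
      (∑ x : D, Finsupp.single ⟨x, x, F x⟩ 1) =
      Finsupp.single ⟨x₀, y₀, F x₀ ≫ φ⟩ 1 := by
  rw [map_sum]
  simp only [catMulL_single_single]
  rw [Finset.sum_eq_single x₀]
  · simp [catMulSingle, compMor]
  · intro x _ hx
    rw [catMulSingle, dif_neg]
    exact fun h => hx h.symm
  · simp

lemma updF_mem (x₀ : D) (h : x₀ ⟶ x₀) (hh : h ∈ IdC D C s x₀) :
    ∀ x : D, (if hx : x = x₀ then eqToHom hx ≫ h ≫ eqToHom hx.symm else 𝟙 x) ∈ IdC D C s x := by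
  intro x
  by_cases hx : x = x₀
  · subst hx
    simpa [IdC] using hh
  · simp [hx, IdC]

/-- under condition (*), for any `f ∈ Mor D` and any `s₀ ∈ 𝒮` there exist
`s', s'' ∈ 𝒮` with `s₀·f = f·s'` and `f·s₀ = s''·f` in `kD`. -/
theorem SMonSet_commutes_with_morphisms (hinj : Function.Injective s.obj)
    (hsurj : Function.Surjective (sMor s)) (hstar : StarCond D C s) :
    ∀ (f : Mor D), ∀ a ∈ SMonSet k D C s,
      (∃ a' ∈ SMonSet k D C s,
        catMulL k a (Finsupp.single f 1) = catMulL k (Finsupp.single f 1) a') ∧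
      (∃ a'' ∈ SMonSet k D C s,
        catMulL k (Finsupp.single f 1) a = catMulL k a'' (Finsupp.single f 1)) := by
  rintro ⟨x₀, y₀, φ⟩ a ⟨F, hF, rfl⟩
  constructor
  · -- a·f = f·a'
    have hs : sMor s ⟨x₀, y₀, φ ≫ F y₀⟩ = sMor s ⟨x₀, y₀, φ⟩ := by
      have h1 : s.map (F y₀) = 𝟙 _ := hF y₀
      simp [sMor, h1]
    obtain ⟨h, hmem, heq⟩ := (hstar x₀ y₀ φ _).2.mp hs
    simp only [Sigma.ext_iff, heq_eq_eq, true_and] at heq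
    refine ⟨∑ x : D, Finsupp.single ⟨x, x,
        if hx : x = x₀ then eqToHom hx ≫ h ≫ eqToHom hx.symm else 𝟙 x⟩ 1,
      ⟨_, updF_mem D C s x₀ h hmem, rfl⟩, ?_⟩
    rw [catMulL_S_single, catMulL_single_S]
    simp [← heq]
  · -- f·a = a''·f
    have hs : sMor s ⟨x₀, y₀, F x₀ ≫ φ⟩ = sMor s ⟨x₀, y₀, φ⟩ := by
      have h1 : s.map (F x₀) = 𝟙 _ := hF x₀
      simp [sMor, h1]
    obtain ⟨h, hmem, heq⟩ := (hstar x₀ y₀ φ _).1.mp hs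
    simp only [Sigma.ext_iff, heq_eq_eq, true_and] at heq
    refine ⟨∑ x : D, Finsupp.single ⟨x, x,
        if hx : x = y₀ then eqToHom hx ≫ h ≫ eqToHom hx.symm else 𝟙 x⟩ 1,
      ⟨_, updF_mem D C s y₀ h hmem, rfl⟩, ?_⟩
    rw [catMulL_single_S, catMulL_S_single]
    simp [← heq]
end

section
/- Assume condition (*): for every f : x → y in D, {g : s(g)=s(f)} = Id_y ∘ f = f ∘ Id_x. Then for m ∈ S(x), the following are equivalent: (a) m ∈ M_S(x), i.e., S(f)(m) = S(g)(m) for all f with d(f)=x and all g with s(g)=s(f); (b) S(h)(m) = m for every h ∈ Id_x. -/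
open CategoryTheory

variable (k : Type) [Field k]

variable (D : Type) [SmallCategory D] [Fintype D] [DecidableEq D]
  [∀ x y : D, Fintype (x ⟶ y)] [∀ x y : D, DecidableEq (x ⟶ y)]
variable (C : Type) [SmallCategory C] [Fintype C] [DecidableEq C]
  [∀ x y : C, Fintype (x ⟶ y)] [∀ x y : C, DecidableEq (x ⟶ y)]

variable (s : D ⥤ C)

variable (S : D ⥤ AlgCat k)

/-- `M_S(x)`: the set of `m ∈ S(x)` such that `S(f)(m) = S(g)(m)` for all `f` with
`d(f) = x` and all `g` with `s(g) = s(f)`. -/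
def MS (x : D) : Set (S.obj x) :=
  {m | ∀ (y z : D) (f : x ⟶ y) (g : x ⟶ z),
    sMor s ⟨x, y, f⟩ = sMor s ⟨x, z, g⟩ →
    (⟨y, S.map f m⟩ : Σ w : D, S.obj w) = ⟨z, S.map g m⟩}

/-- under condition (*), for `m ∈ S(x)` the following are equivalent:
(a) `m ∈ M_S(x)`;  (b) `S(h)(m) = m` for every `h ∈ Id_x`. -/
theorem mem_MS_iff_fixed_by_IdC (hinj : Function.Injective s.obj)
    (hsurj : Function.Surjective (sMor s)) (hstar : StarCond D C s)
    (x : D) (m : S.obj x) :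
    m ∈ MS k D C s S x ↔ ∀ h ∈ IdC D C s x, S.map h m = m := by
  constructor
  · intro hm h hh
    have h1 : sMor s ⟨x, x, 𝟙 x⟩ = sMor s ⟨x, x, h⟩ := by
      simp [sMor, hh]
      exact hh.symm
    have := hm x x (𝟙 x) h h1
    have h2 := eq_of_heq (Sigma.mk.inj_iff.mp this).2
    simpa using h2.symm
  · intro hb y z f g hfg
    obtain ⟨h, hh, heq⟩ := ((hstar x y f ⟨x, z, g⟩).2).mp hfg.symm
    have hz : z = y := congrArg (fun a : Mor D => a.2.1) heq
    subst hz
    have hg : g = h ≫ f := by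
      have h3 := eq_of_heq (Sigma.mk.inj_iff.mp heq).2
      exact eq_of_heq (Sigma.mk.inj_iff.mp h3).2
    subst hg
    congr 1
    rw [S.map_comp]
    simp [hb h hh]
end

section
/- Let (C, σ) be an interior kD-algebra. Then IndP^C_{s,D}(C) := (k ⊗_{kS} C)^S, the S-fixed points of the (kS,kS)-bimodule k ⊗_{kS} C (with k acted on through the augmentation ε and C through σ), is a unital k-algebra under the pointwise multiplication (a₁⊗c₁)(a₂⊗c₂) = a₁a₂ ⊗ c₁c₂, with identity 1 ⊗ 1_C. -/
open CategoryTheory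

variable (k : Type) [Field k]

variable (D : Type) [SmallCategory D] [Fintype D] [DecidableEq D]
  [∀ x y : D, Fintype (x ⟶ y)] [∀ x y : D, DecidableEq (x ⟶ y)]
variable (C : Type) [SmallCategory C] [Fintype C] [DecidableEq C]
  [∀ x y : C, Fintype (x ⟶ y)] [∀ x y : C, DecidableEq (x ⟶ y)]

variable (s : D ⥤ C)

variable (E : Type) [Ring E] [Algebra k E] (σ : CatAlg k D →ₗ[k] E)

/-- The submodule of relations defining `k ⊗_{k𝒮} C` as a quotient of `C` (note that
`ε(s) = 1` for `s ∈ 𝒮`, so `k ⊗_{k𝒮} C ≅ C / span{σ(s)·c - c}`). -/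
def relJ : Submodule k E :=
  Submodule.span k {y : E | ∃ a ∈ SMonSet k D C s, ∃ c : E, y = σ a * c - c}

/-- `k ⊗_{k𝒮} C`, realized as the quotient `C / J`. -/
abbrev QuotQ : Type := E ⧸ relJ k D C s E σ

/-- The canonical projection `C → k ⊗_{k𝒮} C`, `c ↦ 1 ⊗ c`. -/
noncomputable def mkQ : E →ₗ[k] QuotQ k D C s E σ := (relJ k D C s E σ).mkQ

/-- The `𝒮`-fixed points of `k ⊗_{k𝒮} C` under the right action `(1 ⊗ c)·s = 1 ⊗ cσ(s)`:
`q` is fixed iff for every representative `c` of `q` and every `s ∈ 𝒮`,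
`1 ⊗ cσ(s) = q`. -/
def FixQ : Set (QuotQ k D C s E σ) :=
  {q | ∀ a ∈ SMonSet k D C s, ∀ c : E, mkQ k D C s E σ c = q →
    mkQ k D C s E σ (c * σ a) = q}

lemma mkQ_eq_iff (c c' : E) :
    mkQ k D C s E σ c = mkQ k D C s E σ c' ↔ c - c' ∈ relJ k D C s E σ := by
  simp only [mkQ, Submodule.mkQ_apply]
  exact Submodule.Quotient.eq _

/-- `J` is a right ideal. -/
lemma relJ_mul_right (e : E) {y : E} (hy : y ∈ relJ k D C s E σ) :
    y * e ∈ relJ k D C s E σ := by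
  induction hy using Submodule.span_induction with
  | mem y hy =>
    obtain ⟨a, ha, c, rfl⟩ := hy
    refine Submodule.subset_span ⟨a, ha, c * e, ?_⟩
    noncomm_ring
  | zero => simpa using (relJ k D C s E σ).zero_mem
  | add y z _ _ hy hz => simpa [add_mul] using (relJ k D C s E σ).add_mem hy hz
  | smul r y _ hy => simpa [smul_mul_assoc] using (relJ k D C s E σ).smul_mem r hy

lemma fix_sub_mem {c : E} (hc : mkQ k D C s E σ c ∈ FixQ k D C s E σ)
    {a : CatAlg k D} (ha : a ∈ SMonSet k D C s) :
    c * σ a - c ∈ relJ k D C s E σ :=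
  (mkQ_eq_iff k D C s E σ _ _).mp (hc a ha c rfl)

/-- Left multiplication by a fixed element preserves `J`. -/
lemma fix_mul_relJ {c : E} (hc : mkQ k D C s E σ c ∈ FixQ k D C s E σ)
    {y : E} (hy : y ∈ relJ k D C s E σ) : c * y ∈ relJ k D C s E σ := by
  induction hy using Submodule.span_induction with
  | mem y hy =>
    obtain ⟨a, ha, d, rfl⟩ := hy
    have : c * (σ a * d - d) = (c * σ a - c) * d := by noncomm_ring
    rw [this]
    exact relJ_mul_right k D C s E σ d (fix_sub_mem k D C s E σ hc ha)
  | zero => simpa using (relJ k D C s E σ).zero_mem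
  | add y z _ _ hy hz => simpa [mul_add] using (relJ k D C s E σ).add_mem hy hz
  | smul r y _ hy => simpa [mul_smul_comm] using (relJ k D C s E σ).smul_mem r hy

/-- for an interior `kD`-algebra `(C, σ)`, the surjective Puig induction
`IndP^C_{s,D}(C) = (k ⊗_{k𝒮} C)^𝒮` is a unital `k`-algebra under the pointwise
multiplication `(a₁⊗c₁)(a₂⊗c₂) = a₁a₂ ⊗ c₁c₂`, with identity `1 ⊗ 1_C`. -/
theorem IndP_is_algebra (hinj : Function.Injective s.obj)
    (hsurj : Function.Surjective (sMor s))
    (hσ1 : σ (catOne k D) = 1) (hσmul : ∀ a b, σ (catMulL k a b) = σ a * σ b) :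
    -- the pointwise multiplication is well defined on the fixed points
    (∀ c₁ c₁' c₂ c₂' : E,
      mkQ k D C s E σ c₁ ∈ FixQ k D C s E σ → mkQ k D C s E σ c₂ ∈ FixQ k D C s E σ →
      mkQ k D C s E σ c₁ = mkQ k D C s E σ c₁' → mkQ k D C s E σ c₂ = mkQ k D C s E σ c₂' →
      mkQ k D C s E σ (c₁ * c₂) = mkQ k D C s E σ (c₁' * c₂')) ∧
    -- the fixed points are closed under it
    (∀ c₁ c₂ : E,
      mkQ k D C s E σ c₁ ∈ FixQ k D C s E σ → mkQ k D C s E σ c₂ ∈ FixQ k D C s E σ →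
      mkQ k D C s E σ (c₁ * c₂) ∈ FixQ k D C s E σ) ∧
    -- it is associative, and `1 ⊗ 1_C` is a two-sided identity of the fixed points
    (∀ c₁ c₂ c₃ : E, mkQ k D C s E σ ((c₁ * c₂) * c₃) = mkQ k D C s E σ (c₁ * (c₂ * c₃))) ∧
    mkQ k D C s E σ 1 ∈ FixQ k D C s E σ ∧
    (∀ c : E, mkQ k D C s E σ (1 * c) = mkQ k D C s E σ c ∧
      mkQ k D C s E σ (c * 1) = mkQ k D C s E σ c) := by
  refine ⟨?_, ?_, ?_, ?_, ?_⟩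
  · intro c₁ c₁' c₂ c₂' h₁ _ e₁ e₂
    rw [mkQ_eq_iff] at e₁ e₂ ⊢
    have step1 : c₁ * c₂ - c₁' * c₂ ∈ relJ k D C s E σ := by
      have := relJ_mul_right k D C s E σ c₂ e₁
      simpa [sub_mul] using this
    have h₁' : mkQ k D C s E σ c₁' ∈ FixQ k D C s E σ := by
      have h : mkQ k D C s E σ c₁ = mkQ k D C s E σ c₁' := (mkQ_eq_iff k D C s E σ _ _).mpr e₁
      rwa [h] at h₁
    have step2 : c₁' * c₂ - c₁' * c₂' ∈ relJ k D C s E σ := by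
      have := fix_mul_relJ k D C s E σ h₁' e₂
      simpa [mul_sub] using this
    have := (relJ k D C s E σ).add_mem step1 step2
    simpa using this
  · intro c₁ c₂ h₁ h₂ a ha d hd
    rw [mkQ_eq_iff] at hd ⊢
    have hd' : d * σ a - c₁ * c₂ * σ a ∈ relJ k D C s E σ := by
      have := relJ_mul_right k D C s E σ (σ a) hd
      simpa [sub_mul] using this
    have h2 : c₁ * (c₂ * σ a - c₂) ∈ relJ k D C s E σ :=
      fix_mul_relJ k D C s E σ h₁ (fix_sub_mem k D C s E σ h₂ ha)
    have h2' : c₁ * c₂ * σ a - c₁ * c₂ ∈ relJ k D C s E σ := by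
      have e : c₁ * (c₂ * σ a - c₂) = c₁ * c₂ * σ a - c₁ * c₂ := by noncomm_ring
      rwa [e] at h2
    have := (relJ k D C s E σ).add_mem hd' h2'
    simpa using this
  · intro c₁ c₂ c₃; rw [mul_assoc]
  · intro a ha d hd
    rw [mkQ_eq_iff] at hd ⊢
    have h1 : d * σ a - 1 * σ a ∈ relJ k D C s E σ := by
      have := relJ_mul_right k D C s E σ (σ a) hd
      simpa [sub_mul] using this
    have h2 : 1 * σ a - 1 ∈ relJ k D C s E σ := by
      refine Submodule.subset_span ⟨a, ha, 1, ?_⟩; noncomm_ring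
    have := (relJ k D C s E σ).add_mem h1 h2
    simpa using this
  · intro c; exact ⟨by rw [one_mul], by rw [mul_one]⟩
end
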